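/- If G is a connected graph with n vertices and m edges and G has no bridge, then the minimum arrangement cost of G is at least m + (n−1)/2. -/

import Mathlib

open Classical in
/-- The cost of an ordering `α` of the vertices of `G`: the sum over all edges `{u,v}` of
the length `|α(u) − α(v)|`. -/
noncomputable def arrangementCost {V : Type*} [Fintype V] (G : SimpleGraph V)
    (α : V ≃ Fin (Fintype.card V)) : ℕ :=
  ∑ e ∈ G.edgeFinset,
    Sym2.lift ⟨fun u v => ((α u : ℤ) - (α v : ℤ)).natAbs,
      fun u v => by simp only []; omega⟩ e

/-- The length of an edge under an ordering. -/
noncomputable def edgeLen {V : Type*} [Fintype V] (α : V ≃ Fin (Fintype.card V)) :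
    Sym2 V → ℕ :=
  Sym2.lift ⟨fun u v => ((α u : ℤ) - (α v : ℤ)).natAbs,
      fun u v => by simp only []; omega⟩

/-- An edge crosses the cut between positions `k` and `k+1`. -/
def crossesCut {V : Type*} [Fintype V] (α : V ≃ Fin (Fintype.card V)) (k : ℕ)
    (e : Sym2 V) : Prop :=
  ∃ u v, e = s(u, v) ∧ (α u : ℕ) ≤ k ∧ k < (α v : ℕ)

/-- Any walk from the low side of a cut to the high side contains a crossing edge. -/
lemma walk_crossesCut {V : Type*} [Fintype V] {H : SimpleGraph V}
    (α : V ≃ Fin (Fintype.card V)) {a b : V} (W : H.Walk a b) (k : ℕ)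
    (ha : (α a : ℕ) ≤ k) (hb : k < (α b : ℕ)) :
    ∃ e ∈ W.edges, crossesCut α k e := by
  induction W with
  | nil => omega
  | @cons a c b h W ih =>
    by_cases hc : (α c : ℕ) ≤ k
    · obtain ⟨e, he, h'⟩ := ih hc hb
      exact ⟨e, by simp [he], h'⟩
    · exact ⟨s(a, c), by simp, a, c, rfl, ha, by omega⟩

lemma crossesCut_iff {V : Type*} [Fintype V] (α : V ≃ Fin (Fintype.card V)) (k : ℕ)
    (u v : V) :
    crossesCut α k s(u, v) ↔
      ((α u : ℕ) ≤ k ∧ k < (α v : ℕ)) ∨ ((α v : ℕ) ≤ k ∧ k < (α u : ℕ)) := by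
  constructor
  · rintro ⟨u', v', he, h1, h2⟩
    rw [Sym2.eq_iff] at he
    rcases he with ⟨rfl, rfl⟩ | ⟨rfl, rfl⟩
    · exact Or.inl ⟨h1, h2⟩
    · exact Or.inr ⟨h1, h2⟩
  · rintro (⟨h1, h2⟩ | ⟨h1, h2⟩)
    · exact ⟨u, v, rfl, h1, h2⟩
    · exact ⟨v, u, Sym2.eq_swap.symm, h1, h2⟩

open Classical in
/-- If `G` is a connected bridgeless graph with `n` vertices and `m` edges, then its minimum
arrangement cost is at least `m + (n-1)/2`; i.e. every ordering has cost at least that much. -/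
theorem arrangementCost_ge_of_bridgeless {V : Type*} [Fintype V] (G : SimpleGraph V)
    (hconn : G.Connected) (hbridge : ∀ e : Sym2 V, ¬ G.IsBridge e)
    (α : V ≃ Fin (Fintype.card V)) :
    (G.edgeFinset.card : ℚ) + ((Fintype.card V : ℚ) - 1) / 2 ≤ (arrangementCost G α : ℚ) := by
  classical
  have hn1 : 1 ≤ Fintype.card V := Fintype.card_pos_iff.mpr hconn.nonempty
  -- every edge has positive length
  have hlen1 : ∀ e ∈ G.edgeFinset, 1 ≤ edgeLen α e := by
    intro e he
    induction e with
    | h u v =>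
      rw [SimpleGraph.mem_edgeFinset, SimpleGraph.mem_edgeSet] at he
      have hne : u ≠ v := he.ne
      have : α u ≠ α v := fun h => hne (α.injective h)
      have : (α u : ℕ) ≠ (α v : ℕ) := fun h => this (Fin.ext h)
      simp only [edgeLen, Sym2.lift_mk]
      omega
  -- the length of an edge is the number of cuts it crosses
  have hcount : ∀ e ∈ G.edgeFinset,
      ((Finset.range ((Fintype.card V) - 1)).filter fun k => crossesCut α k e).card = edgeLen α e := by
    intro e he
    induction e with
    | h u v =>
      rw [SimpleGraph.mem_edgeFinset, SimpleGraph.mem_edgeSet] at he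
      have hu : (α u : ℕ) < (Fintype.card V) := (α u).isLt
      have hv : (α v : ℕ) < (Fintype.card V) := (α v).isLt
      have : ((Finset.range ((Fintype.card V) - 1)).filter fun k => crossesCut α k s(u, v)) =
          Finset.Ico (min (α u : ℕ) (α v : ℕ)) (max (α u : ℕ) (α v : ℕ)) := by
        ext k
        simp only [Finset.mem_filter, Finset.mem_range, Finset.mem_Ico, crossesCut_iff]
        omega
      rw [this, Nat.card_Ico]
      simp only [edgeLen, Sym2.lift_mk]
      omega
  -- at least two edges cross each cut
  have hcross2 : ∀ k < (Fintype.card V) - 1, 2 ≤ (G.edgeFinset.filter fun e => crossesCut α k e).card := by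
    intro k hk
    have hk1 : k < (Fintype.card V) := by omega
    have hn1' : (Fintype.card V) - 1 < (Fintype.card V) := by omega
    set a : V := α.symm ⟨k, hk1⟩ with ha
    set b : V := α.symm ⟨(Fintype.card V) - 1, hn1'⟩ with hb
    have hak : (α a : ℕ) = k := by simp [ha]
    have hbk : (α b : ℕ) = (Fintype.card V) - 1 := by simp [hb]
    obtain ⟨W⟩ := hconn.preconnected a b
    obtain ⟨e, heW, hec⟩ := walk_crossesCut α W k (by omega) (by omega)
    have heG : e ∈ G.edgeFinset := by
      rw [SimpleGraph.mem_edgeFinset]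
      exact W.edges_subset_edgeSet heW
    have hemem : e ∈ G.edgeFinset.filter fun e => crossesCut α k e :=
      Finset.mem_filter.mpr ⟨heG, hec⟩
    by_contra hlt
    push_neg at hlt
    have hcard1 : (G.edgeFinset.filter fun e => crossesCut α k e).card = 1 := by
      have h1 : 1 ≤ (G.edgeFinset.filter fun e => crossesCut α k e).card :=
        Finset.card_pos.mpr ⟨e, hemem⟩
      omega
    have hsingle : G.edgeFinset.filter (fun e => crossesCut α k e) = {e} := by
      rw [Finset.card_eq_one] at hcard1
      obtain ⟨x, hx⟩ := hcard1
      rw [hx] at hemem ⊢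
      rw [Finset.mem_singleton] at hemem
      rw [hemem]
    -- e is a bridge: contradiction
    obtain ⟨u, v, hev, hu, hv⟩ := hec
    apply hbridge e
    rw [hev, SimpleGraph.isBridge_iff]
    · rintro ⟨W'⟩
      obtain ⟨e', he'W, he'c⟩ := walk_crossesCut α W' k hu hv
      have he'G' : e' ∈ (G.deleteEdges {s(u, v)}).edgeSet :=
        W'.edges_subset_edgeSet he'W
      rw [SimpleGraph.edgeSet_deleteEdges] at he'G'
      have he'G : e' ∈ G.edgeFinset := by
        rw [SimpleGraph.mem_edgeFinset]; exact he'G'.1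
      have : e' ∈ G.edgeFinset.filter fun e => crossesCut α k e :=
        Finset.mem_filter.mpr ⟨he'G, he'c⟩
      rw [hsingle, Finset.mem_singleton] at this
      exact he'G'.2 (by rw [this, hev]; exact Set.mem_singleton _)
  -- at most one crossing edge per cut has length 1
  have hshort1 : ∀ k : ℕ,
      ((G.edgeFinset.filter fun e => crossesCut α k e).filter
        fun e => edgeLen α e = 1).card ≤ 1 := by
    intro k
    apply Finset.card_le_one.mpr
    have key : ∀ e ∈ (G.edgeFinset.filter fun e => crossesCut α k e).filter
        (fun e => edgeLen α e = 1),
        ∃ u v, e = s(u, v) ∧ (α u : ℕ) = k ∧ (α v : ℕ) = k + 1 := by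
      intro e he
      rw [Finset.mem_filter, Finset.mem_filter] at he
      obtain ⟨⟨_, u, v, hev, hu, hv⟩, hlen⟩ := he
      rw [hev] at hlen
      simp only [edgeLen, Sym2.lift_mk] at hlen
      exact ⟨u, v, hev, by omega, by omega⟩
    intro e1 he1 e2 he2
    obtain ⟨u1, v1, h1, hu1, hv1⟩ := key e1 he1
    obtain ⟨u2, v2, h2, hu2, hv2⟩ := key e2 he2
    have hu : u1 = u2 := α.injective (Fin.ext (by omega))
    have hv : v1 = v2 := α.injective (Fin.ext (by omega))
    rw [h1, h2, hu, hv]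
  -- for each cut there is a long crossing edge
  have hlong : ∀ k < (Fintype.card V) - 1,
      1 ≤ ((G.edgeFinset.filter fun e => edgeLen α e ≠ 1).filter
        fun e => crossesCut α k e).card := by
    intro k hk
    have hsplit := Finset.card_filter_add_card_filter_not
      (s := G.edgeFinset.filter fun e => crossesCut α k e)
      (p := fun e => edgeLen α e = 1)
    have h2 := hcross2 k hk
    have h1 := hshort1 k
    have hle : ((G.edgeFinset.filter fun e => crossesCut α k e).filter
        fun e => ¬ edgeLen α e = 1) ⊆
        ((G.edgeFinset.filter fun e => edgeLen α e ≠ 1).filter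
        fun e => crossesCut α k e) := by
      intro e he
      rw [Finset.mem_filter, Finset.mem_filter] at he
      exact Finset.mem_filter.mpr ⟨Finset.mem_filter.mpr ⟨he.1.1, he.2⟩, he.1.2⟩
    have := Finset.card_le_card hle
    omega
  -- sum of lengths of long edges is at least (Fintype.card V) - 1
  set EL := G.edgeFinset.filter (fun e => edgeLen α e ≠ 1) with hEL
  have hELsum : (Fintype.card V) - 1 ≤ ∑ e ∈ EL, edgeLen α e := by
    have h1 : ∑ e ∈ EL, edgeLen α e
        = ∑ e ∈ EL, ∑ k ∈ Finset.range ((Fintype.card V) - 1), if crossesCut α k e then 1 else 0 := by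
      refine Finset.sum_congr rfl fun e he => ?_
      rw [← Finset.card_filter, hcount e (Finset.mem_filter.mp he).1]
    rw [h1, Finset.sum_comm]
    calc (Fintype.card V) - 1 = ∑ _k ∈ Finset.range ((Fintype.card V) - 1), 1 := by simp
      _ ≤ _ := by
          refine Finset.sum_le_sum fun k hk => ?_
          rw [← Finset.card_filter]
          exact hlong k (Finset.mem_range.mp hk)
  -- main inequality over ℕ
  have hmain : 2 * G.edgeFinset.card + ((Fintype.card V) - 1) ≤ 2 * arrangementCost G α := by
    have hcost : arrangementCost G α = ∑ e ∈ G.edgeFinset, edgeLen α e := rfl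
    have h2 : ∑ e ∈ G.edgeFinset, (2 + if edgeLen α e ≠ 1 then edgeLen α e else 0)
        ≤ ∑ e ∈ G.edgeFinset, 2 * edgeLen α e := by
      refine Finset.sum_le_sum fun e he => ?_
      have := hlen1 e he
      by_cases h : edgeLen α e = 1
      · simp [h]
      · rw [if_pos h]
        omega
    rw [Finset.sum_add_distrib, Finset.sum_const, ← Finset.sum_filter, ← hEL,
      ← Finset.mul_sum, smul_eq_mul] at h2
    rw [hcost]
    set S := ∑ e ∈ EL, edgeLen α e
    set T := ∑ e ∈ G.edgeFinset, edgeLen α e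
    set m := G.edgeFinset.card
    omega
  have h' : ((2 * G.edgeFinset.card + ((Fintype.card V) - 1) : ℕ) : ℚ)
      ≤ ((2 * arrangementCost G α : ℕ) : ℚ) := Nat.cast_le.mpr hmain
  push_cast [Nat.cast_sub hn1] at h'
  linarith
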